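/- Let φ = (φ₀,…,φ_m) : ℝ → ℝ^{m+1} be bounded, measurable, and satisfy φ = Tφ pointwise on ℝ. Then: (a) for j = 1,…,m, φ_j is continuous on ℝ; (b) φ₀ is left-continuous at every point of ℝ and continuous at every t ∉ {θ_i : i ∈ ℤ}; (c) at every t ∉ {θ_i : i ∈ ℤ}, φ₀ and each φ_j are differentiable with φ₀'(t) = −k₀·φ₀(t) − g₀(φ₀(t)−φ₁(t), …, φ₀(t)−φ_m(t)) and φ_j'(t) = −k_j·φ_j(t) + g_j(φ₀(t)−φ_j(t)); (d) at every θ_i (i ∈ ℤ) the right limit φ₀(θ_i⁺) := lim_{s→θ_i⁺} φ₀(s) exists and φ₀(θ_i⁺) − φ₀(θ_i) = I₀ + J₀(φ₀(θ_i)). In other words, a bounded solution of the integral equation is a bounded solution of the impulsive differential system (1). -/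

import Mathlib

/-- The Euclidean norm on `Fin n → ℝ`. -/
noncomputable def eNorm {n : ℕ} (v : Fin n → ℝ) : ℝ := Real.sqrt (∑ j, v j ^ 2)

/-- The operator `T` of the paper: coordinate `0` (the systemic arterial pressure) gets
`(Tφ)₀(t) = −∫_{−∞}^t e^{−k₀(t−s)} g₀(φ₀(s)−φ₁(s),…,φ₀(s)−φ_m(s)) ds
  + Σ_{θ_i < t} e^{−k₀(t−θ_i)} (I₀ + J₀(φ₀(θ_i)))`,
and the compartment coordinates `j = 1,…,m` (nonzero indices of `Fin (m+1)`) get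
`(Tφ)_j(t) = ∫_{−∞}^t e^{−k_j(t−s)} g_j(φ₀(s)−φ_j(s)) ds`. -/
noncomputable def Tmap (m : ℕ) (θ : ℤ → ℝ) (k : Fin (m + 1) → ℝ) (I₀ : ℝ)
    (g₀ : (Fin m → ℝ) → ℝ) (g : Fin (m + 1) → ℝ → ℝ) (J₀ : ℝ → ℝ)
    (φ : ℝ → Fin (m + 1) → ℝ) : ℝ → Fin (m + 1) → ℝ := fun t j =>
  if j = 0 then
    -(∫ s in Set.Iic t, Real.exp (-(k 0) * (t - s)) * g₀ (fun i => φ s 0 - φ s i.succ))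
      + ∑' i : ℤ, (if θ i < t then Real.exp (-(k 0) * (t - θ i)) * (I₀ + J₀ (φ (θ i) 0)) else 0)
  else
    ∫ s in Set.Iic t, Real.exp (-(k j) * (t - s)) * g j (φ s 0 - φ s j)

/-- The set `Ω`: bounded measurable functions `φ : ℝ → ℝ^{m+1}` with
`|φ₀(t)| ≤ m₀/k₀ + (I₀ + m_J)·e^{k₀ω}/(1 − e^{−k₀ω})` and `|φ_j(t)| ≤ m_j/k_j`. -/
def OmegaSet (m : ℕ) (ω : ℝ) (k mc : Fin (m + 1) → ℝ) (I₀ mJ : ℝ) :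
    Set (ℝ → Fin (m + 1) → ℝ) :=
  {φ | Measurable φ ∧ (∃ B, ∀ t, eNorm (φ t) ≤ B) ∧ ∀ t,
    |φ t 0| ≤ mc 0 / k 0 + (I₀ + mJ) * Real.exp (k 0 * ω) / (1 - Real.exp (-(k 0) * ω)) ∧
    ∀ j, j ≠ 0 → |φ t j| ≤ mc j / k j}

open MeasureTheory Real Set Filter intervalIntegral
open scoped Topology

section Aux

lemma aux_integrableOn_exp {c : ℝ} (hc : 0 < c) (t : ℝ) :
    IntegrableOn (fun s => Real.exp (c * s)) (Set.Iic t) := by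
  have h1 : IntegrableOn (fun x => Real.exp (-c * x)) (Set.Ioi (-t)) :=
    exp_neg_integrableOn_Ioi _ hc
  have h2 : IntegrableOn (fun s : ℝ => Real.exp (c * s)) (Set.Iio t) := by
    rw [← (Measure.measurePreserving_neg (volume : Measure ℝ)).integrableOn_comp_preimage
      (Homeomorph.neg ℝ).measurableEmbedding] at h1
    simpa [Function.comp_def, mul_neg, neg_Ioi] using h1
  rw [show Set.Iic t = Set.Iio t ∪ {t} by simp [Set.union_comm, Set.Iio_union_right]]
  exact h2.union ((integrableOn_singleton_iff (by simp)).mpr (Or.inr (by simp)))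

lemma aux_integrableOn_mul {c M : ℝ} (hc : 0 < c) {h : ℝ → ℝ} (hm : Measurable h)
    (hb : ∀ s, |h s| ≤ M) (t : ℝ) :
    IntegrableOn (fun s => Real.exp (c * s) * h s) (Set.Iic t) := by
  refine Integrable.mono' ((aux_integrableOn_exp hc t).const_mul M) ?_ ?_
  · exact ((Real.measurable_exp.comp (measurable_const_mul c)).mul hm).aestronglyMeasurable
  · refine Filter.Eventually.of_forall fun s => ?_
    rw [Real.norm_eq_abs, abs_mul, abs_of_pos (Real.exp_pos _)]
    calc Real.exp (c*s) * |h s| ≤ Real.exp (c*s) * M :=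
          mul_le_mul_of_nonneg_left (hb s) (Real.exp_pos _).le
      _ = M * Real.exp (c*s) := mul_comm _ _

lemma aux_intervalIntegrable {c M : ℝ} (hc : 0 < c) {h : ℝ → ℝ} (hm : Measurable h)
    (hb : ∀ s, |h s| ≤ M) (a b : ℝ) :
    IntervalIntegrable (fun s => Real.exp (c * s) * h s) volume a b :=
  ((aux_integrableOn_mul hc hm hb (max a b)).mono_set
    (fun x hx => Set.mem_Iic.mpr ((Set.mem_uIcc.mp hx).elim
      (fun h' => le_trans h'.2 (le_max_right a b)) (fun h' => le_trans h'.2 (le_max_left a b))))).intervalIntegrable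

lemma aux_G_eq {c M : ℝ} (hc : 0 < c) {h : ℝ → ℝ} (hm : Measurable h)
    (hb : ∀ s, |h s| ≤ M) (t : ℝ) :
    (∫ s in Set.Iic t, Real.exp (c * s) * h s)
      = (∫ s in Set.Iic (0:ℝ), Real.exp (c * s) * h s)
        + ∫ s in (0:ℝ)..t, Real.exp (c * s) * h s := by
  have := integral_Iic_sub_Iic (aux_integrableOn_mul hc hm hb 0)
    (aux_integrableOn_mul hc hm hb t)
  linarith [this]

lemma aux_G_cont {c M : ℝ} (hc : 0 < c) {h : ℝ → ℝ} (hm : Measurable h)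
    (hb : ∀ s, |h s| ≤ M) :
    Continuous (fun t => ∫ s in Set.Iic t, Real.exp (c * s) * h s) := by
  have : Continuous (fun t => ∫ s in (0:ℝ)..t, Real.exp (c * s) * h s) :=
    intervalIntegral.continuous_primitive (fun a b => aux_intervalIntegrable hc hm hb a b) 0
  refine Continuous.congr
    ((continuous_const (y := ∫ s in Set.Iic (0:ℝ), Real.exp (c * s) * h s)).add this)
    fun t => (aux_G_eq hc hm hb t).symm

lemma aux_G_deriv {c M : ℝ} (hc : 0 < c) {h : ℝ → ℝ} (hm : Measurable h)
    (hb : ∀ s, |h s| ≤ M) {t : ℝ} (hcont : ContinuousAt h t) :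
    HasDerivAt (fun u => ∫ s in Set.Iic u, Real.exp (c * s) * h s)
      (Real.exp (c * t) * h t) t := by
  have hd : HasDerivAt (fun u => ∫ s in (0:ℝ)..u, Real.exp (c * s) * h s)
      (Real.exp (c * t) * h t) t := by
    refine intervalIntegral.integral_hasDerivAt_right (aux_intervalIntegrable hc hm hb 0 t)
      (((Real.measurable_exp.comp (measurable_const_mul c)).mul hm).stronglyMeasurable.stronglyMeasurableAtFilter)
      (((Real.continuous_exp.comp (continuous_const.mul continuous_id)).continuousAt).mul hcont)
  have := (hasDerivAt_const t (∫ s in Set.Iic (0:ℝ), Real.exp (c * s) * h s)).add hd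
  simp only [zero_add] at this
  exact this.congr_of_eventuallyEq (Filter.Eventually.of_forall fun u => (aux_G_eq hc hm hb u))

lemma aux_F_eq {c : ℝ} (h : ℝ → ℝ) (t : ℝ) :
    (∫ s in Set.Iic t, Real.exp (-c * (t - s)) * h s)
      = Real.exp (-c * t) * ∫ s in Set.Iic t, Real.exp (c * s) * h s := by
  rw [show (fun s : ℝ => Real.exp (-c * (t - s)) * h s)
      = fun s : ℝ => Real.exp (-c * t) * (Real.exp (c * s) * h s) from funext fun s => by
    rw [← mul_assoc, ← Real.exp_add, show -c * t + c * s = -c * (t - s) by ring]]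
  exact MeasureTheory.integral_const_mul _ _

lemma aux_F_cont {c M : ℝ} (hc : 0 < c) {h : ℝ → ℝ} (hm : Measurable h)
    (hb : ∀ s, |h s| ≤ M) :
    Continuous (fun t => ∫ s in Set.Iic t, Real.exp (-c * (t - s)) * h s) := by
  have : Continuous (fun t => Real.exp (-c * t) * ∫ s in Set.Iic t, Real.exp (c * s) * h s) :=
    (Real.continuous_exp.comp (continuous_const.mul continuous_id)).mul (aux_G_cont hc hm hb)
  exact this.congr fun t => (aux_F_eq h t).symm

lemma aux_F_deriv {c M : ℝ} (hc : 0 < c) {h : ℝ → ℝ} (hm : Measurable h)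
    (hb : ∀ s, |h s| ≤ M) {t : ℝ} (hcont : ContinuousAt h t) :
    HasDerivAt (fun u => ∫ s in Set.Iic u, Real.exp (-c * (u - s)) * h s)
      (-c * (∫ s in Set.Iic t, Real.exp (-c * (t - s)) * h s) + h t) t := by
  have he : HasDerivAt (fun u : ℝ => Real.exp (-c * u)) (Real.exp (-c * t) * -c) t := by
    simpa using (HasDerivAt.exp ((hasDerivAt_id t).const_mul (-c)))
  have hmul := he.mul (aux_G_deriv hc hm hb hcont)
  have heq : (Real.exp (-c*t) * -c) * (∫ s in Set.Iic t, Real.exp (c * s) * h s)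
      + Real.exp (-c*t) * (Real.exp (c * t) * h t)
      = -c * (∫ s in Set.Iic t, Real.exp (-c * (t - s)) * h s) + h t := by
    rw [aux_F_eq, ← mul_assoc, ← Real.exp_add]
    simp
    ring
  rw [heq] at hmul
  exact hmul.congr_of_eventuallyEq (Filter.Eventually.of_forall fun u => (aux_F_eq h u))


lemma aux_summable_geo {r : ℝ} (C : ℝ) (hr0 : 0 ≤ r) (hr1 : r < 1) (N : ℤ) :
    Summable (fun i : ℤ => if i ≤ N then C * r ^ (N - i).toNat else 0) := by
  have hinj : Function.Injective (fun n : ℕ => N - (n : ℤ)) := fun a b h => by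
    simp only at h; omega
  refine (Function.Injective.summable_iff hinj ?_).mp ?_
  · intro x hx
    refine if_neg fun hxN => hx ⟨(N - x).toNat, by simp; omega⟩
  · have : ((fun i : ℤ => if i ≤ N then C * r ^ (N - i).toNat else 0)
        ∘ (fun n : ℕ => N - (n : ℤ))) = fun n : ℕ => C * r ^ n := by
      funext n
      simp only [Function.comp_apply]
      rw [if_pos (by omega)]
      congr 2
      omega
    rw [this]
    exact (summable_geometric_of_lt_one hr0 hr1).mul_left C

lemma aux_summable_jump {ω k₀ A : ℝ} (hω : 0 < ω) (hk : 0 < k₀) {θ : ℤ → ℝ}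
    (hθ : ∀ i : ℤ, (i : ℝ) * ω ≤ θ i ∧ θ i < ((i : ℝ) + 1) * ω)
    {c : ℤ → ℝ} (hc : ∀ i, |c i| ≤ A) (t : ℝ) :
    Summable (fun i : ℤ => if θ i < t then Real.exp (k₀ * θ i) * c i else 0) := by
  set N : ℤ := ⌈t / ω⌉ with hN
  have hA : 0 ≤ A := le_trans (abs_nonneg _) (hc 0)
  have hiN : ∀ i : ℤ, θ i < t → i ≤ N := by
    intro i hi
    have h1 : (i : ℝ) * ω < t := lt_of_le_of_lt (hθ i).1 hi
    have h2 : (i : ℝ) < t / ω := (lt_div_iff₀ hω).mpr h1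
    have h3 : (i : ℝ) ≤ (N : ℝ) := le_trans h2.le (Int.le_ceil (t / ω))
    exact_mod_cast h3
  set C : ℝ := A * Real.exp (k₀ * (((N : ℝ) + 1) * ω)) with hC
  have hC0 : 0 ≤ C := mul_nonneg hA (Real.exp_pos _).le
  refine Summable.of_abs ?_
  have hr1 : Real.exp (-(k₀ * ω)) < 1 := by
    rw [Real.exp_lt_one_iff]; nlinarith
  refine Summable.of_nonneg_of_le (fun i => abs_nonneg _) ?_
    (aux_summable_geo C (Real.exp_pos _).le hr1 N)
  intro i
  by_cases hi : θ i < t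
  · rw [if_pos hi, if_pos (hiN i hi), abs_mul, abs_of_pos (Real.exp_pos _)]
    have hbd : Real.exp (k₀ * θ i) ≤ Real.exp (k₀ * (((N:ℝ)+1) * ω)) *
        Real.exp (-(k₀ * ω)) ^ (N - i).toNat := by
      rw [← Real.exp_nat_mul, ← Real.exp_add]
      apply Real.exp_le_exp.mpr
      have hcast : ((N - i).toNat : ℝ) = (N : ℝ) - (i : ℝ) := by
        have := hiN i hi
        have : ((N - i).toNat : ℤ) = N - i := Int.toNat_of_nonneg (by omega)
        exact_mod_cast this
      rw [hcast]
      have h2 : θ i < ((i:ℝ) + 1) * ω := (hθ i).2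
      nlinarith [hiN i hi, (by exact_mod_cast hiN i hi : (i:ℝ) ≤ (N:ℝ))]
    calc Real.exp (k₀ * θ i) * |c i| ≤ Real.exp (k₀ * θ i) * A :=
          mul_le_mul_of_nonneg_left (hc i) (Real.exp_pos _).le
      _ ≤ (Real.exp (k₀ * (((N:ℝ)+1) * ω)) * Real.exp (-(k₀ * ω)) ^ (N - i).toNat) * A :=
          mul_le_mul_of_nonneg_right hbd hA
      _ = C * Real.exp (-(k₀ * ω)) ^ (N - i).toNat := by rw [hC]; ring
  · rw [if_neg hi]
    simp only [abs_zero]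
    split_ifs
    · exact mul_nonneg hC0 (pow_nonneg (Real.exp_pos _).le _)
    · exact le_refl 0

lemma aux_theta_mono {ω : ℝ} (hω : 0 < ω) {θ : ℤ → ℝ}
    (hθ : ∀ i : ℤ, (i : ℝ) * ω ≤ θ i ∧ θ i < ((i : ℝ) + 1) * ω)
    {i j : ℤ} (hij : i < j) : θ i < θ j := by
  have h1 : θ i < ((i : ℝ) + 1) * ω := (hθ i).2
  have h2 : (j : ℝ) * ω ≤ θ j := (hθ j).1
  have h3 : ((i : ℝ) + 1) ≤ (j : ℝ) := by exact_mod_cast hij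
  nlinarith

lemma aux_max {ω : ℝ} (hω : 0 < ω) {θ : ℤ → ℝ}
    (hθ : ∀ i : ℤ, (i : ℝ) * ω ≤ θ i ∧ θ i < ((i : ℝ) + 1) * ω) (t : ℝ) :
    ∃ M : ℤ, θ M < t ∧ ∀ j : ℤ, θ j < t → j ≤ M := by
  have Hbdd : ∃ b : ℤ, ∀ z : ℤ, θ z < t → z ≤ b := by
    refine ⟨⌈t / ω⌉, fun z hz => ?_⟩
    have h1 : (z : ℝ) * ω < t := lt_of_le_of_lt (hθ z).1 hz
    have h2 : (z : ℝ) ≤ (⌈t / ω⌉ : ℝ) := le_trans ((lt_div_iff₀ hω).mpr h1).le (Int.le_ceil _)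
    exact_mod_cast h2
  have Hinh : ∃ z : ℤ, θ z < t := by
    refine ⟨⌈t / ω⌉ - 2, ?_⟩
    have h1 : ((⌈t / ω⌉ : ℝ) - 2 + 1) * ω < t := by
      have ha : (⌈t / ω⌉ : ℝ) < t / ω + 1 := Int.ceil_lt_add_one _
      have hb : t / ω * ω = t := div_mul_cancel₀ t hω.ne'
      nlinarith
    calc θ (⌈t / ω⌉ - 2) < ((((⌈t / ω⌉ : ℤ) - 2 : ℤ) : ℝ) + 1) * ω := (hθ _).2
      _ < t := by push_cast; push_cast at h1; linarith
  exact Int.exists_greatest_of_bdd Hbdd Hinh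

lemma aux_U_congr {θ : ℤ → ℝ} (a : ℤ → ℝ) {t₁ t₂ : ℝ} (hle : t₁ ≤ t₂)
    (h : ∀ i, ¬(t₁ ≤ θ i ∧ θ i < t₂)) :
    (∑' i : ℤ, if θ i < t₁ then a i else 0) = ∑' i : ℤ, if θ i < t₂ then a i else 0 := by
  refine tsum_congr fun i => ?_
  rcases lt_or_ge (θ i) t₁ with hi | hi
  · rw [if_pos hi, if_pos (lt_of_lt_of_le hi hle)]
  · rw [if_neg (not_lt.mpr hi), if_neg (fun hi2 => h i ⟨hi, hi2⟩)]

lemma aux_U_jump {ω k₀ A : ℝ} (hω : 0 < ω) (hk : 0 < k₀) {θ : ℤ → ℝ}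
    (hθ : ∀ i : ℤ, (i : ℝ) * ω ≤ θ i ∧ θ i < ((i : ℝ) + 1) * ω)
    {c : ℤ → ℝ} (hc : ∀ i, |c i| ≤ A) (i : ℤ) {s : ℝ}
    (hs : θ i < s) (hs2 : s ≤ θ (i + 1)) :
    (∑' j : ℤ, if θ j < s then Real.exp (k₀ * θ j) * c j else 0)
      = (∑' j : ℤ, if θ j < θ i then Real.exp (k₀ * θ j) * c j else 0)
        + Real.exp (k₀ * θ i) * c i := by
  have hmono : ∀ {p q : ℤ}, p < q → θ p < θ q := fun h => aux_theta_mono hω hθ h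
  have hpt : ∀ j : ℤ, (if θ j < s then Real.exp (k₀ * θ j) * c j else 0)
      = (if θ j < θ i then Real.exp (k₀ * θ j) * c j else 0)
        + (if j = i then Real.exp (k₀ * θ i) * c i else 0) := by
    intro j
    rcases eq_or_ne j i with rfl | hj
    · rw [if_pos hs, if_neg (lt_irrefl _), if_pos rfl, zero_add]
    · have hθle : ∀ p q : ℤ, p ≤ q → θ p ≤ θ q := by
        intro p q h
        rcases eq_or_lt_of_le h with rfl | h
        · exact le_rfl
        · exact (hmono h).le
      have hiff : θ j < s ↔ θ j < θ i := by
        constructor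
        · intro hjs
          rcases lt_trichotomy j i with h' | h' | h'
          · exact hmono h'
          · exact absurd h' hj
          · exact absurd hjs (not_lt.mpr (le_trans hs2 (hθle (i + 1) j (by omega))))
        · intro hji; exact lt_trans hji hs
      rw [if_neg hj, add_zero]
      rcases lt_or_ge (θ j) s with h' | h'
      · rw [if_pos h', if_pos (hiff.mp h')]
      · rw [if_neg (not_lt.mpr h'), if_neg (fun h'' => absurd (hiff.mpr h'') (not_lt.mpr h'))]
  rw [tsum_congr hpt, Summable.tsum_add (aux_summable_jump hω hk hθ hc (θ i))
    ⟨Real.exp (k₀ * θ i) * c i, hasSum_ite_eq i _⟩, tsum_ite_eq]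
end Aux

/-- A bounded measurable fixed point `φ = Tφ` of the integral equation is a
solution of the impulsive system (1): (a) each `φ_j` (`j = 1,…,m`) is continuous; (b) `φ₀` is
left-continuous everywhere and continuous off `{θ_i}`; (c) off `{θ_i}` the coordinates are
differentiable with `φ₀' = −k₀φ₀ − g₀(φ₀−φ₁,…,φ₀−φ_m)` and `φ_j' = −k_jφ_j + g_j(φ₀−φ_j)`;
(d) at every `θ_i` the right limit of `φ₀` exists and equals `φ₀(θ_i) + I₀ + J₀(φ₀(θ_i))`. -/
theorem stmt15
    (m : ℕ) (hm : 1 ≤ m) (ω : ℝ) (hω : 0 < ω) (θ : ℤ → ℝ)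
    (hθ : ∀ i : ℤ, (i : ℝ) * ω ≤ θ i ∧ θ i < ((i : ℝ) + 1) * ω)
    (k : Fin (m + 1) → ℝ) (hk : ∀ j, 0 < k j) (I₀ : ℝ) (hI : 0 < I₀)
    (g₀ : (Fin m → ℝ) → ℝ) (g : Fin (m + 1) → ℝ → ℝ) (J₀ : ℝ → ℝ)
    (l : Fin (m + 1) → ℝ) (lJ : ℝ) (mc : Fin (m + 1) → ℝ) (mJ : ℝ)
    (hl : ∀ j, 0 ≤ l j) (hlJ : 0 ≤ lJ) (hmc : ∀ j, 0 ≤ mc j) (hmJ : 0 ≤ mJ)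
    (hg₀lip : ∀ z w : Fin m → ℝ, |g₀ z - g₀ w| ≤ l 0 * eNorm (fun i => z i - w i))
    (hglip : ∀ j, j ≠ 0 → ∀ a b : ℝ, |g j a - g j b| ≤ l j * |a - b|)
    (hJlip : ∀ a b : ℝ, |J₀ a - J₀ b| ≤ lJ * |a - b|)
    (hg₀bd : ∀ z, |g₀ z| ≤ mc 0)
    (hgbd : ∀ j, j ≠ 0 → ∀ a, |g j a| ≤ mc j)
    (hJbd : ∀ a, |J₀ a| ≤ mJ)
    (φ : ℝ → Fin (m + 1) → ℝ) (hφmeas : Measurable φ)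
    (hφbd : ∃ B, ∀ t, eNorm (φ t) ≤ B)
    (hfix : ∀ t, φ t = Tmap m θ k I₀ g₀ g J₀ φ t) :
    (∀ j, j ≠ 0 → Continuous (fun t => φ t j)) ∧
    (∀ t : ℝ, ContinuousWithinAt (fun s => φ s 0) (Set.Iic t) t) ∧
    (∀ t : ℝ, (∀ i : ℤ, t ≠ θ i) → ContinuousAt (fun s => φ s 0) t) ∧
    (∀ t : ℝ, (∀ i : ℤ, t ≠ θ i) →
      HasDerivAt (fun s => φ s 0)
        (-(k 0) * φ t 0 - g₀ (fun i => φ t 0 - φ t i.succ)) t ∧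
      ∀ j, j ≠ 0 → HasDerivAt (fun s => φ s j)
        (-(k j) * φ t j + g j (φ t 0 - φ t j)) t) ∧
    (∀ i : ℤ, Filter.Tendsto (fun s => φ s 0) (nhdsWithin (θ i) (Set.Ioi (θ i)))
      (nhds (φ (θ i) 0 + (I₀ + J₀ (φ (θ i) 0))))) := by
  -- basic continuity of the nonlinearities
  have hgcont : ∀ j, j ≠ 0 → Continuous (g j) := by
    intro j hj
    refine (LipschitzWith.of_dist_le_mul (K := (l j).toNNReal) fun a b => ?_).continuous
    rw [Real.dist_eq, Real.dist_eq, Real.coe_toNNReal _ (hl j)]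
    exact hglip j hj a b
  have heNorm_le : ∀ v : Fin m → ℝ, eNorm v ≤ Real.sqrt m * ‖v‖ := by
    intro v
    rw [eNorm]
    have h1 : (∑ j, v j ^ 2) ≤ (m : ℝ) * ‖v‖ ^ 2 := by
      calc (∑ j, v j ^ 2) ≤ ∑ _j : Fin m, ‖v‖ ^ 2 := by
            refine Finset.sum_le_sum fun j _ => ?_
            have h0 : |v j| ≤ ‖v‖ := by
              simpa [Real.norm_eq_abs] using norm_le_pi_norm v j
            nlinarith [abs_nonneg (v j), sq_abs (v j)]
        _ = (m : ℝ) * ‖v‖ ^ 2 := by simp [Finset.sum_const, mul_comm]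
    calc Real.sqrt (∑ j, v j ^ 2) ≤ Real.sqrt ((m : ℝ) * ‖v‖ ^ 2) := Real.sqrt_le_sqrt h1
      _ = Real.sqrt m * ‖v‖ := by
          rw [Real.sqrt_mul (Nat.cast_nonneg m), Real.sqrt_sq (norm_nonneg v)]
  have hg0cont : Continuous g₀ := by
    refine (LipschitzWith.of_dist_le_mul (K := (l 0 * Real.sqrt m).toNNReal)
      fun z w => ?_).continuous
    rw [Real.dist_eq, Real.coe_toNNReal _ (mul_nonneg (hl 0) (Real.sqrt_nonneg _))]
    calc |g₀ z - g₀ w| ≤ l 0 * eNorm (fun i => z i - w i) := hg₀lip z w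
      _ ≤ l 0 * (Real.sqrt m * ‖(fun i => z i - w i)‖) :=
          mul_le_mul_of_nonneg_left (heNorm_le _) (hl 0)
      _ = l 0 * Real.sqrt m * dist z w := by
          rw [dist_eq_norm]
          have : z - w = fun i => z i - w i := rfl
          rw [this]; ring
  -- measurability and bounds of the composed integrands
  have hφ0meas : Measurable fun s => φ s 0 := (measurable_pi_apply 0).comp hφmeas
  have hφjmeas : ∀ j : Fin (m + 1), Measurable fun s => φ s j :=
    fun j => (measurable_pi_apply j).comp hφmeas
  have hmeas0 : Measurable fun s => g₀ (fun i => φ s 0 - φ s i.succ) :=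
    hg0cont.measurable.comp (measurable_pi_lambda _ fun i => hφ0meas.sub (hφjmeas i.succ))
  have hb0 : ∀ s, |g₀ (fun i => φ s 0 - φ s i.succ)| ≤ mc 0 := fun s => hg₀bd _
  have hmeasj : ∀ j, j ≠ 0 → Measurable fun s => g j (φ s 0 - φ s j) :=
    fun j hj => (hgcont j hj).measurable.comp (hφ0meas.sub (hφjmeas j))
  have hbj : ∀ j, j ≠ 0 → ∀ s, |g j (φ s 0 - φ s j)| ≤ mc j := fun j hj s => hgbd j hj _
  -- fixed point equations, coordinatewise
  have hfix0 : ∀ t, φ t 0 =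
      -(∫ s in Set.Iic t, Real.exp (-(k 0) * (t - s)) * g₀ (fun i => φ s 0 - φ s i.succ))
      + ∑' i : ℤ, (if θ i < t then Real.exp (-(k 0) * (t - θ i)) * (I₀ + J₀ (φ (θ i) 0))
          else 0) := by
    intro t
    conv_lhs => rw [hfix t]
    simp [Tmap]
  have hfixj : ∀ j, j ≠ 0 → ∀ t, φ t j =
      ∫ s in Set.Iic t, Real.exp (-(k j) * (t - s)) * g j (φ s 0 - φ s j) := by
    intro j hj t
    conv_lhs => rw [hfix t]
    simp [Tmap, hj]
  -- jump coefficients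
  have hc : ∀ i : ℤ, |I₀ + J₀ (φ (θ i) 0)| ≤ I₀ + mJ := by
    intro i
    calc |I₀ + J₀ (φ (θ i) 0)| ≤ |I₀| + |J₀ (φ (θ i) 0)| := abs_add_le _ _
      _ ≤ I₀ + mJ := add_le_add (le_of_eq (abs_of_pos hI)) (hJbd _)
  have hmono : ∀ {p q : ℤ}, p < q → θ p < θ q := fun h => aux_theta_mono hω hθ h
  have hθle : ∀ p q : ℤ, p ≤ q → θ p ≤ θ q := by
    intro p q h
    rcases eq_or_lt_of_le h with rfl | h
    · exact le_rfl
    · exact (hmono h).le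
  -- S = e^{-k₀ t} * U
  have hSU : ∀ t : ℝ,
      (∑' i : ℤ, (if θ i < t then Real.exp (-(k 0) * (t - θ i)) * (I₀ + J₀ (φ (θ i) 0)) else 0))
      = Real.exp (-(k 0) * t)
        * ∑' i : ℤ, (if θ i < t then Real.exp (k 0 * θ i) * (I₀ + J₀ (φ (θ i) 0)) else 0) := by
    intro t
    rw [← tsum_mul_left]
    refine tsum_congr fun i => ?_
    split_ifs with h
    · rw [← mul_assoc, ← Real.exp_add, show -(k 0) * t + k 0 * θ i = -(k 0) * (t - θ i) by ring]
    · rw [mul_zero]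
  -- part (a)
  have parta : ∀ j, j ≠ 0 → Continuous fun t => φ t j := by
    intro j hj
    exact (aux_F_cont (hk j) (hmeasj j hj) (hbj j hj)).congr fun t => (hfixj j hj t).symm
  -- part (b2): continuity off the impulse times
  have partb2 : ∀ t : ℝ, (∀ i : ℤ, t ≠ θ i) → ContinuousAt (fun s => φ s 0) t := by
    intro t ht
    obtain ⟨M, hM1, hM2⟩ := aux_max hω hθ t
    have hM3 : t < θ (M + 1) := by
      refine lt_of_le_of_ne (le_of_not_gt fun h => ?_) (ht (M + 1))
      have := hM2 (M + 1) h; omega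
    have hUconst : ∀ s ∈ Set.Ioo (θ M) (θ (M + 1)),
        (∑' i : ℤ, (if θ i < s then Real.exp (k 0 * θ i) * (I₀ + J₀ (φ (θ i) 0)) else 0))
        = ∑' i : ℤ, (if θ i < t then Real.exp (k 0 * θ i) * (I₀ + J₀ (φ (θ i) 0)) else 0) := by
      intro s hs
      rcases le_total s t with h | h
      · refine aux_U_congr _ h fun i hi => ?_
        have h1 := hM2 i hi.2
        have h2 := hθle i M h1
        linarith [hs.1, hi.1]
      · refine (aux_U_congr _ h fun i hi => ?_).symm
        rcases le_or_gt i M with h1 | h1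
        · have h2 := hθle i M h1
          linarith [hi.1, hM1]
        · have h2 := hθle (M + 1) i (by omega)
          linarith [hi.2, hs.2]
    have hcont : ContinuousAt (fun s : ℝ =>
        -(∫ u in Set.Iic s, Real.exp (-(k 0) * (s - u)) * g₀ (fun i => φ u 0 - φ u i.succ))
        + Real.exp (-(k 0) * s)
          * ∑' i : ℤ, (if θ i < t then Real.exp (k 0 * θ i) * (I₀ + J₀ (φ (θ i) 0)) else 0)) t :=
      ((aux_F_cont (hk 0) hmeas0 hb0).neg.add
        ((Real.continuous_exp.comp (continuous_const.mul continuous_id)).mul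
          continuous_const)).continuousAt
    refine hcont.congr ?_
    refine Filter.eventuallyEq_of_mem (Ioo_mem_nhds hM1 hM3) fun s hs => ?_
    rw [hfix0 s, hSU s, hUconst s hs]
  refine ⟨parta, ?_, partb2, ?_, ?_⟩
  · -- part (b1): left continuity everywhere
    intro t
    obtain ⟨M, hM1, hM2⟩ := aux_max hω hθ t
    have hUleft : ∀ s, θ M < s → s ≤ t →
        (∑' i : ℤ, (if θ i < s then Real.exp (k 0 * θ i) * (I₀ + J₀ (φ (θ i) 0)) else 0))
        = ∑' i : ℤ, (if θ i < t then Real.exp (k 0 * θ i) * (I₀ + J₀ (φ (θ i) 0)) else 0) := by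
      intro s h1 h2
      refine aux_U_congr _ h2 fun i hi => ?_
      have h3 := hθle i M (hM2 i hi.2)
      linarith [hi.1]
    have hcont : ContinuousWithinAt (fun s : ℝ =>
        -(∫ u in Set.Iic s, Real.exp (-(k 0) * (s - u)) * g₀ (fun i => φ u 0 - φ u i.succ))
        + Real.exp (-(k 0) * s)
          * ∑' i : ℤ, (if θ i < t then Real.exp (k 0 * θ i) * (I₀ + J₀ (φ (θ i) 0)) else 0))
        (Set.Iic t) t :=
      (((aux_F_cont (hk 0) hmeas0 hb0).neg.add
        ((Real.continuous_exp.comp (continuous_const.mul continuous_id)).mul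
          continuous_const))).continuousWithinAt
    refine hcont.congr_of_eventuallyEq ?_ (by rw [hfix0 t, hSU t])
    filter_upwards [self_mem_nhdsWithin,
      mem_nhdsWithin_of_mem_nhds (Ioi_mem_nhds hM1)] with s hs1 hs2
    rw [hfix0 s, hSU s, hUleft s hs2 hs1]
  · -- part (c): derivatives off the impulse times
    intro t ht
    obtain ⟨M, hM1, hM2⟩ := aux_max hω hθ t
    have hM3 : t < θ (M + 1) := by
      refine lt_of_le_of_ne (le_of_not_gt fun h => ?_) (ht (M + 1))
      have := hM2 (M + 1) h; omega
    have hUconst : ∀ s ∈ Set.Ioo (θ M) (θ (M + 1)),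
        (∑' i : ℤ, (if θ i < s then Real.exp (k 0 * θ i) * (I₀ + J₀ (φ (θ i) 0)) else 0))
        = ∑' i : ℤ, (if θ i < t then Real.exp (k 0 * θ i) * (I₀ + J₀ (φ (θ i) 0)) else 0) := by
      intro s hs
      rcases le_total s t with h | h
      · refine aux_U_congr _ h fun i hi => ?_
        have h2 := hθle i M (hM2 i hi.2)
        linarith [hs.1, hi.1]
      · refine (aux_U_congr _ h fun i hi => ?_).symm
        rcases le_or_gt i M with h1 | h1
        · have h2 := hθle i M h1
          linarith [hi.1, hM1]
        · have h2 := hθle (M + 1) i (by omega)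
          linarith [hi.2, hs.2]
    have hφ0ca : ContinuousAt (fun s => φ s 0) t := partb2 t ht
    have hcont0 : ContinuousAt (fun s => g₀ (fun i => φ s 0 - φ s i.succ)) t := by
      refine hg0cont.continuousAt.comp ?_
      exact continuousAt_pi.mpr fun i =>
        hφ0ca.sub ((parta i.succ (Fin.succ_ne_zero i)).continuousAt)
    -- derivative of the integral part
    have hd1 := aux_F_deriv (hk 0) hmeas0 hb0 hcont0
    -- derivative of the jump part
    have hdexp : HasDerivAt (fun s : ℝ => Real.exp (-(k 0) * s))
        (Real.exp (-(k 0) * t) * -(k 0)) t := by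
      simpa using HasDerivAt.exp ((hasDerivAt_id t).const_mul (-(k 0)))
    have hd2 := hdexp.mul_const
      (∑' i : ℤ, (if θ i < t then Real.exp (k 0 * θ i) * (I₀ + J₀ (φ (θ i) 0)) else 0))
    have hdS : HasDerivAt (fun s : ℝ =>
        ∑' i : ℤ, (if θ i < s then Real.exp (-(k 0) * (s - θ i)) * (I₀ + J₀ (φ (θ i) 0)) else 0))
        (Real.exp (-(k 0) * t) * -(k 0)
          * ∑' i : ℤ, (if θ i < t then Real.exp (k 0 * θ i) * (I₀ + J₀ (φ (θ i) 0)) else 0)) t := by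
      refine hd2.congr_of_eventuallyEq ?_
      refine Filter.eventuallyEq_of_mem (Ioo_mem_nhds hM1 hM3) fun s hs => ?_
      rw [hSU s, hUconst s hs]
    constructor
    · have hsum := hd1.neg.add hdS
      have heq : (fun s => φ s 0) = fun s =>
          -(∫ u in Set.Iic s, Real.exp (-(k 0) * (s - u)) * g₀ (fun i => φ u 0 - φ u i.succ))
          + ∑' i : ℤ, (if θ i < s then Real.exp (-(k 0) * (s - θ i)) * (I₀ + J₀ (φ (θ i) 0))
              else 0) := funext fun s => hfix0 s
      have hsum := hsum.congr_of_eventuallyEq (Filter.Eventually.of_forall fun s => hfix0 s)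
      refine hsum.congr_deriv ?_
      rw [hfix0 t, hSU t]
      ring
    · intro j hj
      have hcontj : ContinuousAt (fun s => g j (φ s 0 - φ s j)) t :=
        ((hgcont j hj).continuousAt).comp (hφ0ca.sub ((parta j hj).continuousAt))
      have hdj := aux_F_deriv (hk j) (hmeasj j hj) (hbj j hj) hcontj
      rw [← hfixj j hj t] at hdj
      have heq : (fun s => φ s j) = fun s =>
          ∫ u in Set.Iic s, Real.exp (-(k j) * (s - u)) * g j (φ u 0 - φ u j) :=
        funext fun s => hfixj j hj s
      rw [← heq] at hdj
      convert hdj using 1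
  · -- part (d): right limits at the impulse times
    intro i
    have hstep : θ i < θ (i + 1) := hmono (by omega)
    have hjump : ∀ s, θ i < s → s ≤ θ (i + 1) →
        (∑' j : ℤ, (if θ j < s then Real.exp (k 0 * θ j) * (I₀ + J₀ (φ (θ j) 0)) else 0))
        = (∑' j : ℤ, (if θ j < θ i then Real.exp (k 0 * θ j) * (I₀ + J₀ (φ (θ j) 0)) else 0))
          + Real.exp (k 0 * θ i) * (I₀ + J₀ (φ (θ i) 0)) :=
      fun s h1 h2 => aux_U_jump hω (hk 0) hθ hc i h1 h2
    have hcont : Continuous (fun s : ℝ =>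
        -(∫ u in Set.Iic s, Real.exp (-(k 0) * (s - u)) * g₀ (fun i => φ u 0 - φ u i.succ))
        + Real.exp (-(k 0) * s)
          * ((∑' j : ℤ, (if θ j < θ i then Real.exp (k 0 * θ j) * (I₀ + J₀ (φ (θ j) 0)) else 0))
            + Real.exp (k 0 * θ i) * (I₀ + J₀ (φ (θ i) 0)))) :=
      (aux_F_cont (hk 0) hmeas0 hb0).neg.add
        ((Real.continuous_exp.comp (continuous_const.mul continuous_id)).mul continuous_const)
    have htends := (hcont.continuousWithinAt
      (s := Set.Ioi (θ i)) (x := θ i)).tendsto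
    have hval : (-(∫ u in Set.Iic (θ i), Real.exp (-(k 0) * (θ i - u))
          * g₀ (fun i => φ u 0 - φ u i.succ))
        + Real.exp (-(k 0) * θ i)
          * ((∑' j : ℤ, (if θ j < θ i then Real.exp (k 0 * θ j) * (I₀ + J₀ (φ (θ j) 0)) else 0))
            + Real.exp (k 0 * θ i) * (I₀ + J₀ (φ (θ i) 0))))
        = φ (θ i) 0 + (I₀ + J₀ (φ (θ i) 0)) := by
      have hfe := hfix0 (θ i)
      rw [hSU (θ i)] at hfe
      have h1 : Real.exp (-(k 0) * θ i) * Real.exp (k 0 * θ i) = 1 := by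
        rw [← Real.exp_add, show -(k 0) * θ i + k 0 * θ i = 0 by ring, Real.exp_zero]
      linear_combination -hfe + (I₀ + J₀ (φ (θ i) 0)) * h1
    rw [hval] at htends
    refine htends.congr' ?_
    filter_upwards [Ioo_mem_nhdsGT_of_mem ⟨le_refl (θ i), hstep⟩] with s hs
    rw [hfix0 s, hSU s, hjump s hs.1 hs.2.le]
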